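/- For every m ≥ 1 and n ≥ 1, the number of sequences (a_1,...,a_n) of nonnegative integers satisfying a_1 = 0 and a_{s+1} ≤ a_s + m for all s = 1,...,n-1 equals the nth Fuss–Catalan number c_n^(m) = (1/(mn+1)) * binomial((m+1)n, n). -/

import Mathlib

namespace MDyck

variable (m n : ℕ)

/-- length of the words -/
def L : ℕ := (m + 1) * n + 1

lemma L_pos : 0 < L m n := Nat.succ_pos _

def val (b : Bool) : ℤ := if b then (m : ℤ) else -1

/-- periodic extension -/
def ext (w : Fin (L m n) → Bool) (i : ℕ) : Bool :=
  w ⟨i % L m n, Nat.mod_lt _ (L_pos m n)⟩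

def F (w : Fin (L m n) → Bool) (k : ℕ) : ℤ :=
  ∑ i ∈ Finset.range k, val m (ext m n w i)

def cnt (w : Fin (L m n) → Bool) : ℕ :=
  (Finset.univ.filter (fun i => w i = true)).card

def Good (w : Fin (L m n) → Bool) : Prop := ∀ k < L m n, 0 ≤ F m n w k

def rot (r : Fin (L m n)) (w : Fin (L m n) → Bool) : Fin (L m n) → Bool :=
  fun i => w (i + r)

variable {m n}

lemma ext_lt (w : Fin (L m n) → Bool) (i : ℕ) (h : i < L m n) :
    ext m n w i = w ⟨i, h⟩ := by
  simp [ext, Nat.mod_eq_of_lt h]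

lemma ext_add_L (w : Fin (L m n) → Bool) (i : ℕ) :
    ext m n w (i + L m n) = ext m n w i := by
  simp [ext, Nat.add_mod_right]

lemma F_succ (w : Fin (L m n) → Bool) (k : ℕ) :
    F m n w (k + 1) = F m n w k + val m (ext m n w k) :=
  Finset.sum_range_succ _ _

lemma F_formula (w : Fin (L m n) → Bool) (k : ℕ) :
    F m n w k =
      (m + 1) * ((Finset.range k).filter (fun i => ext m n w i = true)).card - k := by
  induction k with
  | zero => simp [F]
  | succ k ih =>
    rw [F_succ, ih, Finset.range_add_one, Finset.filter_insert]
    by_cases h : ext m n w k = true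
    · rw [if_pos h, Finset.card_insert_of_notMem (by simp)]
      simp only [val, h, if_true]
      push_cast
      ring
    · rw [if_neg h]
      simp only [val, h, if_false]
      push_cast
      ring

lemma card_filter_range (w : Fin (L m n) → Bool) :
    ((Finset.range (L m n)).filter (fun i => ext m n w i = true)).card = cnt m n w := by
  rw [cnt, Finset.card_filter, Finset.card_filter, ← Fin.sum_univ_eq_sum_range]
  refine Finset.sum_congr rfl fun i _ => ?_
  rw [ext_lt w i i.isLt]

lemma F_L (w : Fin (L m n) → Bool) (hc : cnt m n w = n) :
    F m n w (L m n) = -1 := by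
  rw [F_formula, card_filter_range, hc, L]
  push_cast
  ring

lemma F_add_L (w : Fin (L m n) → Bool) (hc : cnt m n w = n) (k : ℕ) :
    F m n w (k + L m n) = F m n w k - 1 := by
  induction k with
  | zero => rw [zero_add, F_L w hc]; simp [F]
  | succ k ih =>
    have : k + 1 + L m n = (k + L m n) + 1 := by ring
    rw [this, F_succ, F_succ, ext_add_L, ih]
    ring

end MDyck
namespace MDyck
section B
variable {m n : ℕ}

lemma ext_rot (w : Fin (L m n) → Bool) (r : Fin (L m n)) (k : ℕ) :
    ext m n (rot m n r w) k = ext m n w (k + r.val) := by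
  simp only [ext, rot]
  congr 1
  apply Fin.ext
  simp [Fin.add_def, Nat.mod_add_mod]

lemma F_rot (w : Fin (L m n) → Bool) (r : Fin (L m n)) (k : ℕ) :
    F m n (rot m n r w) k = F m n w (r.val + k) - F m n w r.val := by
  induction k with
  | zero => simp [F]
  | succ k ih =>
    rw [F_succ, ih, ext_rot]
    have : r.val + (k + 1) = (r.val + k) + 1 := by ring
    rw [this, F_succ]
    have : k + r.val = r.val + k := by ring
    rw [this]
    ring

def GoodAt (m n : ℕ) (w : Fin (L m n) → Bool) (r : ℕ) : Prop :=
  ∀ k < L m n, F m n w r ≤ F m n w (r + k)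

lemma good_rot_iff (w : Fin (L m n) → Bool) (r : Fin (L m n)) :
    Good m n (rot m n r w) ↔ GoodAt m n w r.val := by
  constructor
  · intro h k hk
    have := h k hk
    rw [F_rot] at this
    linarith
  · intro h k hk
    rw [F_rot]
    have := h k hk
    linarith

lemma exists_goodAt (w : Fin (L m n) → Bool) (hc : cnt m n w = n) :
    ∃ r : Fin (L m n), GoodAt m n w r.val := by
  classical
  set S := (Finset.range (L m n)).filter
    (fun r => ∀ j ∈ Finset.range (L m n), F m n w r ≤ F m n w j) with hS
  have hne : S.Nonempty := by
    obtain ⟨r, hr, hmin⟩ := Finset.exists_min_image (Finset.range (L m n)) (F m n w)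
      ⟨0, by simp [L_pos m n]⟩
    exact ⟨r, Finset.mem_filter.2 ⟨hr, hmin⟩⟩
  set r := S.min' hne with hrdef
  have hrS : r ∈ S := S.min'_mem hne
  obtain ⟨hrL, hrmin⟩ := Finset.mem_filter.1 hrS
  rw [Finset.mem_range] at hrL
  refine ⟨⟨r, hrL⟩, ?_⟩
  show GoodAt m n w r
  intro k hk
  by_cases h : r + k < L m n
  · exact hrmin _ (Finset.mem_range.2 h)
  · -- r + k = j + L with j < r
    push_neg at h
    set j := r + k - L m n with hj
    have hjr : j < r := by omega
    have hrk : r + k = j + L m n := by omega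
    rw [hrk, F_add_L w hc]
    have hjlt : j < L m n := lt_trans hjr hrL
    have h1 : F m n w r ≤ F m n w j := hrmin _ (Finset.mem_range.2 hjlt)
    have h2 : F m n w r ≠ F m n w j := by
      intro heq
      have hjS : j ∈ S := by
        refine Finset.mem_filter.2 ⟨Finset.mem_range.2 hjlt, fun i hi => ?_⟩
        rw [← heq]
        exact hrmin i hi
      have := S.min'_le j hjS
      omega
    have : F m n w r < F m n w j := lt_of_le_of_ne h1 h2
    omega

lemma goodAt_unique (w : Fin (L m n) → Bool) (hc : cnt m n w = n)
    {r r' : Fin (L m n)} (h : GoodAt m n w r.val) (h' : GoodAt m n w r'.val) :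
    r = r' := by
  have key : ∀ s s' : Fin (L m n), GoodAt m n w s.val → GoodAt m n w s'.val →
      ¬ (s.val < s'.val) := by
    intro s s' hs hs' hlt
    have h1 : F m n w s.val ≤ F m n w s'.val := by
      have := hs (s'.val - s.val) (by omega)
      rwa [show s.val + (s'.val - s.val) = s'.val by omega] at this
    have h2 : F m n w s'.val ≤ F m n w (s.val + L m n) := by
      have := hs' (s.val + L m n - s'.val) (by omega)
      rwa [show s'.val + (s.val + L m n - s'.val) = s.val + L m n by omega] at this
    rw [F_add_L w hc] at h2
    omega
  have := key r r' h h'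
  have := key r' r h' h
  apply Fin.ext
  omega
end B
end MDyck
namespace MDyck
section C
variable {m n : ℕ}

instance : NeZero (L m n) := ⟨Nat.succ_ne_zero _⟩

lemma cnt_rot (w : Fin (L m n) → Bool) (r : Fin (L m n)) :
    cnt m n (rot m n r w) = cnt m n w := by
  apply Finset.card_equiv (Equiv.addRight r)
  intro i
  rw [Finset.mem_filter, Finset.mem_filter]
  simp [rot]

lemma rot_rot (w : Fin (L m n) → Bool) (r s : Fin (L m n)) :
    rot m n r (rot m n s w) = rot m n (s + r) w := by
  funext i
  simp only [rot]
  rw [add_assoc, add_comm r s]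

lemma rot_neg_rot (w : Fin (L m n) → Bool) (r : Fin (L m n)) :
    rot m n (-r) (rot m n r w) = w := by
  funext i
  simp [rot]

lemma rot_rot_neg (w : Fin (L m n) → Bool) (r : Fin (L m n)) :
    rot m n r (rot m n (-r) w) = w := by
  funext i
  simp [rot]

noncomputable def theRot (w : Fin (L m n) → Bool) (hc : cnt m n w = n) : Fin (L m n) :=
  (exists_goodAt w hc).choose

lemma theRot_spec (w : Fin (L m n) → Bool) (hc : cnt m n w = n) :
    GoodAt m n w (theRot w hc).val :=
  (exists_goodAt w hc).choose_spec

lemma theRot_eq (w : Fin (L m n) → Bool) (hc : cnt m n w = n) {r : Fin (L m n)}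
    (h : GoodAt m n w r.val) : theRot w hc = r :=
  goodAt_unique w hc (theRot_spec w hc) h

noncomputable def wEquiv (m n : ℕ) :
    {w : Fin (L m n) → Bool // cnt m n w = n} ≃
      {w : Fin (L m n) → Bool // cnt m n w = n ∧ Good m n w} × Fin (L m n) where
  toFun w := (⟨rot m n (theRot w.1 w.2) w.1,
      (cnt_rot w.1 _).trans w.2,
      (good_rot_iff w.1 _).2 (theRot_spec w.1 w.2)⟩, theRot w.1 w.2)
  invFun p := ⟨rot m n (-p.2) p.1.1, (cnt_rot _ _).trans p.1.2.1⟩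
  left_inv w := by
    apply Subtype.ext
    simp only []
    rw [rot_neg_rot]
  right_inv p := by
    obtain ⟨⟨g, hgc, hgg⟩, r⟩ := p
    have hc' : cnt m n (rot m n (-r) g) = n := (cnt_rot _ _).trans hgc
    have hgood : GoodAt m n (rot m n (-r) g) r.val := by
      rw [← good_rot_iff, rot_rot_neg]
      exact hgg
    have hr : theRot (rot m n (-r) g) hc' = r := theRot_eq _ _ hgood
    ext : 1
    · apply Subtype.ext
      simp only [hr]
      rw [rot_rot_neg]
    · exact hr

lemma card_W_eq : Nat.card {w : Fin (L m n) → Bool // cnt m n w = n} =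
    Nat.card {w : Fin (L m n) → Bool // cnt m n w = n ∧ Good m n w} * L m n := by
  rw [Nat.card_congr (wEquiv m n), Nat.card_prod]
  simp

lemma card_W : Nat.card {w : Fin (L m n) → Bool // cnt m n w = n} =
    Nat.choose (L m n) n := by
  have e : {w : Fin (L m n) → Bool // cnt m n w = n} ≃
      {s : Finset (Fin (L m n)) // s.card = n} :=
    { toFun := fun w => ⟨Finset.univ.filter (fun i => w.1 i = true), w.2⟩
      invFun := fun s => ⟨fun i => decide (i ∈ s.1), by
        simpa [cnt] using s.2⟩
      left_inv := fun w => by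
        apply Subtype.ext
        funext i
        simp
      right_inv := fun s => by
        apply Subtype.ext
        simp }
  rw [Nat.card_congr e, Nat.card_eq_fintype_card, Fintype.card_finset_len,
    Fintype.card_fin]
end C
end MDyck
namespace MDyck
section D
variable {m n : ℕ}

lemma count_gen (w : Fin (L m n) → Bool) (f : Fin n → ℕ)
    (hfL : ∀ a, f a < L m n)
    (him : ∀ i : Fin (L m n), w i = true ↔ ∃ a, f a = i.val)
    (hinj : Function.Injective f) {k : ℕ} (hk : k ≤ L m n) :
    ((Finset.range k).filter (fun i => ext m n w i = true)).card
      = (Finset.univ.filter (fun a : Fin n => f a < k)).card := by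
  have himg : (Finset.range k).filter (fun i => ext m n w i = true)
      = (Finset.univ.filter (fun a : Fin n => f a < k)).image f := by
    ext i
    simp only [Finset.mem_filter, Finset.mem_range, Finset.mem_image, Finset.mem_univ, true_and]
    constructor
    · rintro ⟨hik, hext⟩
      have hiL : i < L m n := lt_of_lt_of_le hik hk
      rw [ext_lt w i hiL] at hext
      obtain ⟨a, ha⟩ := (him ⟨i, hiL⟩).1 hext
      exact ⟨a, by simpa [ha] using hik, ha⟩
    · rintro ⟨a, hak, rfl⟩
      refine ⟨hak, ?_⟩
      rw [ext_lt w _ (hfL a)]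
      exact (him ⟨f a, hfL a⟩).2 ⟨a, rfl⟩
  rw [himg, Finset.card_image_of_injective _ hinj]

lemma F_count (w : Fin (L m n) → Bool) (f : Fin n → ℕ)
    (hfL : ∀ a, f a < L m n)
    (him : ∀ i : Fin (L m n), w i = true ↔ ∃ a, f a = i.val)
    (hinj : Function.Injective f) {k : ℕ} (hk : k ≤ L m n) :
    F m n w k = (m + 1) * ((Finset.univ.filter (fun a : Fin n => f a < k)).card : ℤ) - k := by
  rw [F_formula, count_gen w f hfL him hinj hk]

/-- the increasing enumeration of the true positions -/
noncomputable def tW (w : Fin (L m n) → Bool) (hc : cnt m n w = n) : Fin n ↪o Fin (L m n) :=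
  (Finset.univ.filter (fun i => w i = true)).orderEmbOfFin hc

lemma tW_mem_iff (w : Fin (L m n) → Bool) (hc : cnt m n w = n) (i : Fin (L m n)) :
    w i = true ↔ ∃ a, tW w hc a = i := by
  have := Finset.range_orderEmbOfFin (Finset.univ.filter (fun i => w i = true)) hc
  constructor
  · intro hw
    have hi : i ∈ (Finset.univ.filter (fun i => w i = true) : Finset (Fin (L m n))) := by
      simp [hw]
    have : i ∈ Set.range (tW w hc) := by rw [tW, this]; exact_mod_cast hi
    exact this
  · rintro ⟨a, rfl⟩
    have h2 := Finset.orderEmbOfFin_mem (Finset.univ.filter (fun i => w i = true)) hc a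
    rw [Finset.mem_filter] at h2
    exact h2.2

lemma tW_mem_iff' (w : Fin (L m n) → Bool) (hc : cnt m n w = n) (i : Fin (L m n)) :
    w i = true ↔ ∃ a, ((tW w hc a : Fin (L m n)) : ℕ) = i.val := by
  rw [tW_mem_iff w hc i]
  constructor
  · rintro ⟨a, rfl⟩; exact ⟨a, rfl⟩
  · rintro ⟨a, ha⟩; exact ⟨a, Fin.ext ha⟩

lemma card_lt_tW (w : Fin (L m n) → Bool) (hc : cnt m n w = n) (j : Fin n) :
    (Finset.univ.filter
      (fun a : Fin n => ((tW w hc a : Fin (L m n)) : ℕ) < ((tW w hc j : Fin (L m n)) : ℕ))).card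
      = j.val := by
  have : Finset.univ.filter
      (fun a : Fin n => ((tW w hc a : Fin (L m n)) : ℕ) < ((tW w hc j : Fin (L m n)) : ℕ))
      = Finset.Iio j := by
    ext a
    simp only [Finset.mem_filter, Finset.mem_univ, true_and, Finset.mem_Iio]
    rw [← Fin.lt_iff_val_lt_val]
    exact (tW w hc).lt_iff_lt
  rw [this, Fin.card_Iio]

/-- Key formula: the prefix sum at the `j`-th true position. -/
lemma F_tW (w : Fin (L m n) → Bool) (hc : cnt m n w = n) (j : Fin n) :
    F m n w ((tW w hc j : Fin (L m n)) : ℕ)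
      = (m + 1) * (j : ℤ) - ((tW w hc j : Fin (L m n)) : ℕ) := by
  rw [F_count w (fun a => ((tW w hc a : Fin (L m n)) : ℕ))
      (fun a => (tW w hc a).isLt) (tW_mem_iff' w hc)
      (fun a b hab => (tW w hc).injective (Fin.ext hab))
      (le_of_lt (tW w hc j).isLt), card_lt_tW w hc j]

end D
end MDyck
namespace MDyck
section E
variable {m n : ℕ}

/-- the sequence associated to a word -/
noncomputable def phiFun (w : Fin (L m n) → Bool) (hc : cnt m n w = n) : Fin n → ℕ :=
  fun j => (F m n w ((tW w hc j : Fin (L m n)) : ℕ)).toNat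

lemma phiFun_zero (hn : 0 < n) (w : Fin (L m n) → Bool) (hc : cnt m n w = n)
    (hg : Good m n w) : phiFun w hc ⟨0, hn⟩ = 0 := by
  unfold phiFun
  have h1 := F_tW w hc ⟨0, hn⟩
  have h2 := hg _ (tW w hc ⟨0, hn⟩).isLt
  have h3 : (((⟨0, hn⟩ : Fin n) : ℕ) : ℤ) = 0 := by norm_num
  rw [h3, mul_zero] at h1
  omega

lemma phiFun_step (w : Fin (L m n) → Bool) (hc : cnt m n w = n)
    (hg : Good m n w) (s : Fin n) (h : (s : ℕ) + 1 < n) :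
    phiFun w hc ⟨(s : ℕ) + 1, h⟩ ≤ phiFun w hc s + m := by
  unfold phiFun
  have h1 := F_tW w hc s
  have h2 := F_tW w hc ⟨(s : ℕ) + 1, h⟩
  have h3 : ((tW w hc s : Fin (L m n)) : ℕ) < ((tW w hc ⟨(s : ℕ) + 1, h⟩ : Fin (L m n)) : ℕ) := by
    have : s < (⟨(s : ℕ) + 1, h⟩ : Fin n) := by
      rw [Fin.lt_iff_val_lt_val]; simp
    exact (tW w hc).strictMono this
  have h4 := hg _ (tW w hc s).isLt
  have h5 := hg _ (tW w hc ⟨(s : ℕ) + 1, h⟩).isLt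
  have h6 : (((⟨(s : ℕ) + 1, h⟩ : Fin n) : ℕ) : ℤ) = ((s : ℕ) : ℤ) + 1 := by norm_num
  rw [h6] at h2
  have h7 : ((m : ℤ) + 1) * (((s : ℕ) : ℤ) + 1) = ((m : ℤ) + 1) * ((s : ℕ) : ℤ) + (m + 1) := by
    ring
  rw [h7] at h2
  omega

noncomputable def phi (hn : 0 < n)
    (w : {w : Fin (L m n) → Bool // cnt m n w = n ∧ Good m n w}) :
    {a : Fin n → ℕ //
      a ⟨0, hn⟩ = 0 ∧
      ∀ s : Fin n, ∀ h : (s : ℕ) + 1 < n, a ⟨(s : ℕ) + 1, h⟩ ≤ a s + m} :=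
  ⟨phiFun w.1 w.2.1, phiFun_zero hn w.1 w.2.1 w.2.2, phiFun_step w.1 w.2.1 w.2.2⟩

lemma phi_injective (hn : 0 < n) : Function.Injective (phi (m := m) hn) := by
  rintro ⟨w, hc, hg⟩ ⟨w', hc', hg'⟩ heq
  have haeq : ∀ j : Fin n, phiFun w hc j = phiFun w' hc' j := by
    intro j
    exact congrFun (congrArg Subtype.val heq) j
  have htW : ∀ j : Fin n, tW w hc j = tW w' hc' j := by
    intro j
    have h1 := F_tW w hc j
    have h2 := F_tW w' hc' j
    have h4 := hg _ (tW w hc j).isLt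
    have h5 := hg' _ (tW w' hc' j).isLt
    have h6 := haeq j
    unfold phiFun at h6
    apply Fin.ext
    omega
  have hrange : (Finset.univ.filter (fun i => w i = true) : Finset (Fin (L m n)))
      = Finset.univ.filter (fun i => w' i = true) := by
    apply Finset.coe_injective
    have r1 : Set.range ⇑(tW w hc)
        = (Finset.univ.filter (fun i => w i = true) : Finset (Fin (L m n))) :=
      Finset.range_orderEmbOfFin _ hc
    have r2 : Set.range ⇑(tW w' hc')
        = (Finset.univ.filter (fun i => w' i = true) : Finset (Fin (L m n))) :=
      Finset.range_orderEmbOfFin _ hc'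
    rw [← r1, ← r2, show ⇑(tW w hc) = ⇑(tW w' hc') from funext htW]
  apply Subtype.ext
  show w = w'
  funext i
  have := Finset.ext_iff.1 hrange i
  simp only [Finset.mem_filter, Finset.mem_univ, true_and] at this
  cases hwi : w i <;> cases hwi' : w' i
  · rfl
  · simp [hwi, hwi'] at this
  · simp [hwi, hwi'] at this
  · rfl

lemma phi_surjective (hn : 0 < n) : Function.Surjective (phi (m := m) hn) := by
  rintro ⟨a, h0, hstep⟩
  -- chain bound
  have hchain : ∀ (d : ℕ) (k j : Fin n), (j : ℕ) = (k : ℕ) + d → a j ≤ a k + m * d := by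
    intro d
    induction d with
    | zero =>
      intro k j hj
      have : j = k := Fin.ext (by omega)
      simp [this]
    | succ d ih =>
      intro k j hj
      have hjn := j.isLt
      have hjm : (k : ℕ) + d < n := by omega
      have h1 : a j ≤ a ⟨(k : ℕ) + d, hjm⟩ + m := by
        have hh : ((⟨(k : ℕ) + d, hjm⟩ : Fin n) : ℕ) + 1 < n := by simp; omega
        have := hstep ⟨(k : ℕ) + d, hjm⟩ hh
        have hje : j = ⟨((⟨(k : ℕ) + d, hjm⟩ : Fin n) : ℕ) + 1, hh⟩ := Fin.ext (by simp; omega)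
        rw [hje]
        exact this
      have h2 := ih k ⟨(k : ℕ) + d, hjm⟩ rfl
      have h3 : m * (d + 1) = m * d + m := by ring
      omega
  have hbound : ∀ j : Fin n, a j ≤ m * (j : ℕ) := by
    intro j
    have := hchain (j : ℕ) ⟨0, hn⟩ j (by simp)
    rw [h0] at this
    omega
  have hle : ∀ j : Fin n, a j ≤ (m + 1) * (j : ℕ) := by
    intro j
    exact le_trans (hbound j) (Nat.mul_le_mul (by omega) le_rfl)
  set tN : Fin n → ℕ := fun k => (m + 1) * (k : ℕ) - a k with htN
  have htNL : ∀ k : Fin n, tN k < L m n := by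
    intro k
    have h1 : (m + 1) * ((k : ℕ) + 1) ≤ (m + 1) * n := Nat.mul_le_mul le_rfl k.isLt
    have h2 : (m + 1) * ((k : ℕ) + 1) = (m + 1) * (k : ℕ) + (m + 1) := by ring
    have h3 := hle k
    have h4 : tN k = (m + 1) * (k : ℕ) - a k := rfl
    rw [h4, L]
    omega
  have hmono : StrictMono tN := by
    intro k j hkj
    have hkj' : (k : ℕ) < (j : ℕ) := hkj
    obtain ⟨e, he⟩ : ∃ e, (j : ℕ) = (k : ℕ) + e := ⟨(j : ℕ) - (k : ℕ), by omega⟩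
    have h1 := hchain e k j he
    have h2 : (m + 1) * (j : ℕ) = (m + 1) * (k : ℕ) + (m + 1) * e := by rw [he]; ring
    have h3 : (m + 1) * e = m * e + e := by ring
    have he1 : 1 ≤ e := by omega
    have hak := hle k
    show (m + 1) * (k : ℕ) - a k < (m + 1) * (j : ℕ) - a j
    omega
  set w : Fin (L m n) → Bool := fun i => decide (∃ k : Fin n, (i : ℕ) = tN k) with hw
  have hinjN : Function.Injective tN := hmono.injective
  have hfilter : Finset.univ.filter (fun i => w i = true)
      = Finset.univ.image (fun k : Fin n => (⟨tN k, htNL k⟩ : Fin (L m n))) := by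
    ext i
    simp only [Finset.mem_filter, Finset.mem_univ, true_and, Finset.mem_image, hw,
      decide_eq_true_eq]
    constructor
    · rintro ⟨k, hk⟩
      exact ⟨k, Fin.ext hk.symm⟩
    · rintro ⟨k, rfl⟩
      exact ⟨k, rfl⟩
  have hc : cnt m n w = n := by
    rw [cnt, hfilter, Finset.card_image_of_injective _
      (fun x y hxy => hinjN (congrArg Fin.val hxy)), Finset.card_univ, Fintype.card_fin]
  have him : ∀ i : Fin (L m n), w i = true ↔ ∃ k : Fin n, tN k = (i : ℕ) := by
    intro i
    simp only [hw, decide_eq_true_eq]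
    constructor
    · rintro ⟨k, hk⟩; exact ⟨k, hk.symm⟩
    · rintro ⟨k, hk⟩; exact ⟨k, hk.symm⟩
  have hgood : Good m n w := by
    intro k hk
    rw [F_count w tN htNL him hinjN (le_of_lt hk)]
    set c := (Finset.univ.filter (fun a : Fin n => tN a < k)).card with hcdef
    by_cases hcn : c < n
    · have hkle : k ≤ tN ⟨c, hcn⟩ := by
        by_contra hlt
        push_neg at hlt
        have hsub : Finset.Iic (⟨c, hcn⟩ : Fin n) ⊆
            Finset.univ.filter (fun a : Fin n => tN a < k) := by
          intro x hx
          rw [Finset.mem_Iic] at hx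
          rw [Finset.mem_filter]
          exact ⟨Finset.mem_univ x, lt_of_le_of_lt (hmono.monotone hx) hlt⟩
        have hcard := Finset.card_le_card hsub
        rw [Fin.card_Iic] at hcard
        simp only [← hcdef] at hcard
        omega
      have h1 : tN ⟨c, hcn⟩ ≤ (m + 1) * c := by
        have : tN ⟨c, hcn⟩ = (m + 1) * c - a ⟨c, hcn⟩ := rfl
        omega
      have h2 : k ≤ (m + 1) * c := le_trans hkle h1
      have h3 : ((k : ℕ) : ℤ) ≤ (((m + 1) * c : ℕ) : ℤ) := by exact_mod_cast h2
      push_cast at h3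
      linarith
    · push_neg at hcn
      have h1 : k ≤ (m + 1) * n := by
        rw [L] at hk
        omega
      have h2 : (m + 1) * n ≤ (m + 1) * c := Nat.mul_le_mul le_rfl hcn
      have h3 : ((k : ℕ) : ℤ) ≤ (((m + 1) * c : ℕ) : ℤ) := by exact_mod_cast le_trans h1 h2
      push_cast at h3
      linarith
  refine ⟨⟨w, hc, hgood⟩, ?_⟩
  apply Subtype.ext
  show phiFun w hc = a
  have hts : ⇑(tW w hc) = fun k : Fin n => (⟨tN k, htNL k⟩ : Fin (L m n)) := by
    symm
    apply Finset.orderEmbOfFin_unique hc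
    · intro i
      rw [Finset.mem_filter]
      refine ⟨Finset.mem_univ _, ?_⟩
      rw [hw]
      simp only [decide_eq_true_eq]
      exact ⟨i, rfl⟩
    · intro x y hxy
      exact hmono hxy
  funext j
  unfold phiFun
  rw [hts]
  have hF := F_count w tN htNL him hinjN (k := tN j) (le_of_lt (htNL j))
  have hcount : (Finset.univ.filter (fun a : Fin n => tN a < tN j)).card = (j : ℕ) := by
    have : Finset.univ.filter (fun a : Fin n => tN a < tN j) = Finset.Iio j := by
      ext x
      simp only [Finset.mem_filter, Finset.mem_univ, true_and, Finset.mem_Iio]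
      exact hmono.lt_iff_lt
    rw [this, Fin.card_Iio]
  rw [hcount] at hF
  have htNj : ((tN j : ℕ) : ℤ) = ((m : ℤ) + 1) * ((j : ℕ) : ℤ) - (a j : ℤ) := by
    have h1 : tN j = (m + 1) * (j : ℕ) - a j := rfl
    have h2 := hle j
    rw [h1]
    push_cast [h2]
    ring
  simp only []
  omega

end E
end MDyck

/-- For `m ≥ 1`, `n ≥ 1`, the number of sequences `(a_1,…,a_n)` of nonnegative
integers with `a_1 = 0` and `a_{s+1} ≤ a_s + m` for `s = 1,…,n-1` equals the `n`-th
Fuss–Catalan number `c_n^(m) = (1/(mn+1)) * binomial((m+1)n, n)` (stated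
multiplicatively to stay in `ℕ`). -/
theorem card_mDyckSequences_eq_fussCatalan (m n : ℕ) (hm : 1 ≤ m) (hn : 0 < n) :
    Nat.card {a : Fin n → ℕ //
      a ⟨0, hn⟩ = 0 ∧
      ∀ s : Fin n, ∀ h : (s : ℕ) + 1 < n, a ⟨(s : ℕ) + 1, h⟩ ≤ a s + m} * (m * n + 1) =
    Nat.choose ((m + 1) * n) n := by
  classical
  have hsub : (m + 1) * n + 1 - n = m * n + 1 := by
    have : (m + 1) * n = m * n + n := by ring
    omega
  have hid := Nat.add_one_mul_choose_eq ((m + 1) * n) n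
  have hbij : Function.Bijective (MDyck.phi (m := m) hn) :=
    ⟨MDyck.phi_injective hn, MDyck.phi_surjective hn⟩
  have hcard := Nat.card_eq_of_bijective _ hbij
  have h2 : Nat.card {w : Fin (MDyck.L m n) → Bool // MDyck.cnt m n w = n ∧ MDyck.Good m n w}
      * MDyck.L m n = Nat.choose (MDyck.L m n) n :=
    MDyck.card_W_eq.symm.trans MDyck.card_W
  rw [hcard] at h2
  have hL : MDyck.L m n = (m + 1) * n + 1 := rfl
  rw [hL] at h2
  apply Nat.eq_of_mul_eq_mul_left (show 0 < (m + 1) * n + 1 by positivity)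
  rw [hid, Nat.choose_succ_right_eq, hsub, ← h2]
  ring
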